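/- Let p > 1 and let U ⊆ ℂ^{n_A} ⊗ ℂ^{n_B} be a nonzero subspace. Then H_{min,p}(U) ≥ (1/(1−p)) · log₂(E(U)^p + (1 − E(U))^p), where E(U) is the geometric measure of entanglement of U. -/

import Mathlib

/-
Common definitions.

We model the tensor product `ℂ^{n₁} ⊗ ⋯ ⊗ ℂ^{n_m}` concretely as
`EuclideanSpace ℂ (∀ i, Fin (n i))` (coordinates with respect to the standard
product basis), and the `d`-fold tensor power `(ℂ^a)^{⊗ d}` as
`EuclideanSpace ℂ (ι → Fin a)` for an index type `ι` of cardinality `d`.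
-/

noncomputable section

open Finset

/-- The product (elementary tensor) vector `φ₁ ⊗ ⋯ ⊗ φ_m` in a multipartite space,
in coordinates. -/
def prodVec {m : ℕ} {n : Fin m → ℕ} (φ : ∀ i, EuclideanSpace ℂ (Fin (n i))) :
    EuclideanSpace ℂ (∀ i, Fin (n i)) :=
  WithLp.toLp 2 fun v => ∏ i, φ i (v i)

/-- The product vector `φ₁ ⊗ ⋯ ⊗ φ_m` in `(ℂ^n)^{⊗ m}`, in coordinates. -/
def prodVecC {m n : ℕ} (φ : Fin m → EuclideanSpace ℂ (Fin n)) :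
    EuclideanSpace ℂ (Fin m → Fin n) :=
  WithLp.toLp 2 fun v => ∏ i, φ i (v i)

/-- The product vector `φ₁ ⊗ φ₂` in a bipartite space, in coordinates. -/
def prodVec2 {ι₁ ι₂ : Type*} (φ₁ : EuclideanSpace ℂ ι₁) (φ₂ : EuclideanSpace ℂ ι₂) :
    EuclideanSpace ℂ (ι₁ × ι₂) :=
  WithLp.toLp 2 fun p => φ₁ p.1 * φ₂ p.2

/-- Geometric measure of entanglement of a subspace of a multipartite space:
`E(U) = inf { 1 - ⟨φ₁⊗⋯⊗φ_m, Π_U (φ₁⊗⋯⊗φ_m)⟩ : ‖φ_i‖ = 1 }`, where we use that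
`⟨x, Π_U x⟩ = ‖Π_U x‖²`. -/
def gme {m : ℕ} {n : Fin m → ℕ} (U : Submodule ℂ (EuclideanSpace ℂ (∀ i, Fin (n i)))) : ℝ :=
  sInf {x | ∃ φ : ∀ i, EuclideanSpace ℂ (Fin (n i)),
    (∀ i, ‖φ i‖ = 1) ∧ x = 1 - ‖U.orthogonalProjection (prodVec φ)‖ ^ 2}

/-- Geometric measure of entanglement of a subspace of `(ℂ^n)^{⊗ m}`. -/
def gmeC {m n : ℕ} (U : Submodule ℂ (EuclideanSpace ℂ (Fin m → Fin n))) : ℝ :=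
  sInf {x | ∃ φ : Fin m → EuclideanSpace ℂ (Fin n),
    (∀ i, ‖φ i‖ = 1) ∧ x = 1 - ‖U.orthogonalProjection (prodVecC φ)‖ ^ 2}

/-- Geometric measure of entanglement of a subspace of a bipartite space. -/
def gme2 {ι₁ ι₂ : Type*} [Fintype ι₁] [Fintype ι₂]
    (U : Submodule ℂ (EuclideanSpace ℂ (ι₁ × ι₂))) : ℝ :=
  sInf {x | ∃ (φ₁ : EuclideanSpace ℂ ι₁) (φ₂ : EuclideanSpace ℂ ι₂),
    ‖φ₁‖ = 1 ∧ ‖φ₂‖ = 1 ∧ x = 1 - ‖U.orthogonalProjection (prodVec2 φ₁ φ₂)‖ ^ 2}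

/-- The symmetric subspace `S^{|ι|}(ℂ^a)` of `(ℂ^a)^{⊗ ι}`: tensors invariant under all
permutations of the tensor factors. -/
def symmSub (a : ℕ) (ι : Type*) : Submodule ℂ (EuclideanSpace ℂ (ι → Fin a)) where
  carrier := {ψ | ∀ σ : Equiv.Perm ι, ∀ v : ι → Fin a, ψ (v ∘ σ) = ψ v}
  zero_mem' := fun _ _ => rfl
  add_mem' := by
    intro x y hx hy σ v
    show x (v ∘ σ) + y (v ∘ σ) = x v + y v
    rw [hx σ v, hy σ v]
  smul_mem' := by
    intro c x hx σ v
    show c * x (v ∘ σ) = c * x v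
    rw [hx σ v]

/-- Splitting an index `v : Fin d ⊕ Fin d → Fin a` into a pair of indices, realizing
`(ℂ^a)^{⊗ 2d} ≅ (ℂ^a)^{⊗ d} ⊗ (ℂ^a)^{⊗ d}`. -/
def pairSplit {a d : ℕ} (v : (Fin d ⊕ Fin d) → Fin a) : (Fin d → Fin a) × (Fin d → Fin a) :=
  (v ∘ Sum.inl, v ∘ Sum.inr)

/-- The symmetric subspace `S^{2d}(ℂ^a)`, viewed inside
`(ℂ^a)^{⊗ d} ⊗ (ℂ^a)^{⊗ d} = EuclideanSpace ℂ ((Fin d → Fin a) × (Fin d → Fin a))`. -/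
def symmSub2 (a d : ℕ) :
    Submodule ℂ (EuclideanSpace ℂ ((Fin d → Fin a) × (Fin d → Fin a))) where
  carrier := {ψ | ∀ σ : Equiv.Perm (Fin d ⊕ Fin d), ∀ v : (Fin d ⊕ Fin d) → Fin a,
    ψ (pairSplit (v ∘ σ)) = ψ (pairSplit v)}
  zero_mem' := fun _ _ => rfl
  add_mem' := by
    intro x y hx hy σ v
    show x (pairSplit (v ∘ σ)) + y (pairSplit (v ∘ σ)) = x (pairSplit v) + y (pairSplit v)
    rw [hx σ v, hy σ v]
  smul_mem' := by
    intro c x hx σ v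
    show c * x (pairSplit (v ∘ σ)) = c * x (pairSplit v)
    rw [hx σ v]

/-- The tensor product `W₁ ⊗ W₂` of subspaces, as the span of the elementary tensors,
inside the concrete bipartite space. -/
def tensorPairs {ι₁ ι₂ : Type*} [Fintype ι₁] [Fintype ι₂]
    (W₁ : Submodule ℂ (EuclideanSpace ℂ ι₁)) (W₂ : Submodule ℂ (EuclideanSpace ℂ ι₂)) :
    Submodule ℂ (EuclideanSpace ℂ (ι₁ × ι₂)) :=
  Submodule.span ℂ {χ | ∃ ψ ∈ W₁, ∃ φ ∈ W₂, χ = prodVec2 ψ φ}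

/-- The tensor product `U ⊗ V` of two bipartite subspaces
`U, V ⊆ ℂ^{ι₁} ⊗ ℂ^{ι₂}`, viewed as a bipartite subspace of
`(ℂ^{ι₁} ⊗ ℂ^{ι₁}) ⊗ (ℂ^{ι₂} ⊗ ℂ^{ι₂})` via the regrouping isomorphism that swaps
the middle two tensor factors. -/
def tensorSub {ι₁ ι₂ : Type*} [Fintype ι₁] [Fintype ι₂]
    (U V : Submodule ℂ (EuclideanSpace ℂ (ι₁ × ι₂))) :
    Submodule ℂ (EuclideanSpace ℂ ((ι₁ × ι₁) × (ι₂ × ι₂))) :=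
  Submodule.span ℂ {χ | ∃ ψ ∈ U, ∃ φ ∈ V,
    χ = WithLp.toLp 2 fun p => ψ (p.1.1, p.2.1) * φ (p.1.2, p.2.2)}

/-- Entrywise complex conjugate of a vector, with respect to the standard basis. -/
def conjVec {ι : Type*} (ψ : EuclideanSpace ℂ ι) : EuclideanSpace ℂ ι :=
  WithLp.toLp 2 fun v => starRingEnd ℂ (ψ v)

/-- The subspace `Ū` of entrywise complex conjugates of vectors of `U`. -/
def conjSubmodule {ι : Type*} (U : Submodule ℂ (EuclideanSpace ℂ ι)) :
    Submodule ℂ (EuclideanSpace ℂ ι) where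
  carrier := conjVec '' U
  zero_mem' := ⟨0, U.zero_mem, by
    ext v; simp [conjVec]⟩
  add_mem' := by
    rintro a b ⟨x, hx, rfl⟩ ⟨y, hy, rfl⟩
    exact ⟨x + y, U.add_mem hx hy, by
      ext v; simp [conjVec]⟩
  smul_mem' := by
    rintro c a ⟨x, hx, rfl⟩
    refine ⟨starRingEnd ℂ c • x, U.smul_mem _ hx, ?_⟩
    ext v
    simp [conjVec]

/-- The content (type) of a word `w : Fin d → Fin a`: the vector `α ∈ ℤ_{≥0}^a`
recording how many times each letter occurs. -/
def wordContent {a d : ℕ} (w : Fin d → Fin a) : Fin a → ℕ :=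
  fun i => (Finset.univ.filter fun j => w j = i).card

/-- The monomial orthonormal basis vector `|α⟩ = C(d,α)^{1/2} Π_{S^d(ℂ^a)} (e₁^{⊗α₁} ⊗ ⋯ ⊗ e_a^{⊗α_a})`
of the symmetric subspace `S^d(ℂ^a)`, where `α = wordContent w` and
`e₁^{⊗α₁} ⊗ ⋯ ⊗ e_a^{⊗α_a}` is the standard basis vector of `(ℂ^a)^{⊗ d}` indexed by any word `w`
of content `α` (the projection does not depend on the choice of such a word). -/
def monVec (a d : ℕ) (w : Fin d → Fin a) : EuclideanSpace ℂ (Fin d → Fin a) :=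
  (Real.sqrt (Nat.multinomial Finset.univ (wordContent w)) : ℂ) •
    ((symmSub a (Fin d)).orthogonalProjection (EuclideanSpace.single w 1) :
      EuclideanSpace ℂ (Fin d → Fin a))

/-- The squared Schmidt coefficients of a bipartite vector `ψ`, i.e. the eigenvalues of
`M Mᴴ` where `M` is the coefficient matrix of `ψ`. -/
def schmidtSqCoeffs {ι₁ ι₂ : Type*} [Fintype ι₁] [Fintype ι₂] [DecidableEq ι₁]
    (ψ : EuclideanSpace ℂ (ι₁ × ι₂)) : ι₁ → ℝ :=
  (Matrix.isHermitian_mul_conjTranspose_self (Matrix.of fun i j => ψ (i, j))).eigenvalues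

/-- The Rényi `p`-entropy of (the squared Schmidt coefficients of) a bipartite vector. -/
def renyiEnt (p : ℝ) {ι₁ ι₂ : Type*} [Fintype ι₁] [Fintype ι₂] [DecidableEq ι₁]
    (ψ : EuclideanSpace ℂ (ι₁ × ι₂)) : ℝ :=
  (1 / (1 - p)) * Real.logb 2 (∑ i, schmidtSqCoeffs ψ i ^ p)

/-- The minimum output Rényi `p`-entropy of a bipartite subspace. -/
def hminEnt (p : ℝ) {ι₁ ι₂ : Type*} [Fintype ι₁] [Fintype ι₂] [DecidableEq ι₁]
    (U : Submodule ℂ (EuclideanSpace ℂ (ι₁ × ι₂))) : ℝ :=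
  sInf {x | ∃ ψ ∈ U, ‖ψ‖ = 1 ∧ x = renyiEnt p ψ}

end


section Aux
open Matrix

lemma aux_convex_pair {p a b c d : ℝ} (hp : 1 ≤ p) (hd : 0 ≤ d) (hdc : d ≤ c) (hcb : c ≤ b)
    (hba : b ≤ a) (hsum : b + c = a + d) : b ^ p + c ^ p ≤ a ^ p + d ^ p := by
  have hconv := convexOn_rpow hp
  have hda : d ≤ a := by linarith
  rcases eq_or_lt_of_le hda with h | h
  · have hb : b = a := le_antisymm hba (by linarith)
    have hc : c = d := by linarith
    rw [hb, hc]
  · have had : 0 < a - d := by linarith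
    set θ := (b - d) / (a - d) with hθ
    have hθ0 : 0 ≤ θ := div_nonneg (by linarith) had.le
    have hθ1 : θ ≤ 1 := by rw [div_le_one had]; linarith
    have hkey : θ * (a - d) = b - d := by rw [hθ, div_mul_cancel₀ _ had.ne']
    have hb' : θ • a + (1 - θ) • d = b := by simp only [smul_eq_mul]; nlinarith
    have hc' : (1 - θ) • a + θ • d = c := by simp only [smul_eq_mul]; nlinarith
    have ha0 : (0:ℝ) ≤ a := hd.trans hda
    have h1 := hconv.2 (Set.mem_Ici.2 ha0) (Set.mem_Ici.2 hd) hθ0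
      (by linarith : (0:ℝ) ≤ 1 - θ) (by ring)
    have h2 := hconv.2 (Set.mem_Ici.2 ha0) (Set.mem_Ici.2 hd)
      (by linarith : (0:ℝ) ≤ 1 - θ) hθ0 (by ring)
    rw [hb'] at h1; rw [hc'] at h2
    simp only [smul_eq_mul] at h1 h2
    linarith

open Finset in
lemma aux_sum_rpow {n : ℕ} (l : Fin n → ℝ) (E p : ℝ) (hp : 1 < p) (hE0 : 0 ≤ E)
    (hE1 : E ≤ 1) (hnn : ∀ i, 0 ≤ l i) (hub : ∀ i, l i ≤ 1 - E) (hsum : ∑ i, l i = 1) :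
    ∑ i, l i ^ p ≤ E ^ p + (1 - E) ^ p := by
  have hp0 : (0:ℝ) < p := by linarith
  have hp1 : (0:ℝ) ≤ p - 1 := by linarith
  -- generic bound: if each l i ≤ t then each l i ^ p ≤ l i * t ^ (p-1)
  have hterm : ∀ (t : ℝ), 0 ≤ t → ∀ i, l i ≤ t → l i ^ p ≤ l i * t ^ (p - 1) := by
    intro t ht i hi
    rcases eq_or_lt_of_le (hnn i) with h0 | h0
    · rw [← h0, Real.zero_rpow hp0.ne', zero_mul]
    · calc l i ^ p = l i ^ (1 + (p-1)) := by ring_nf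
        _ = l i ^ (1:ℝ) * l i ^ (p-1) := Real.rpow_add h0 _ _
        _ ≤ l i * t ^ (p-1) := by
            rw [Real.rpow_one]
            exact mul_le_mul_of_nonneg_left (Real.rpow_le_rpow (hnn i) hi hp1) (hnn i)
  by_cases hcase : ∃ i, 1/2 < l i
  · obtain ⟨i₀, hi₀⟩ := hcase
    set t := l i₀ with htdef
    have ht1E : t ≤ 1 - E := hub i₀
    have hrest_sum : ∑ i ∈ univ.erase i₀, l i = 1 - t := by
      have := Finset.add_sum_erase univ l (mem_univ i₀)
      rw [hsum] at this; linarith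
    have h1t0 : 0 ≤ 1 - t := by
      rw [← hrest_sum]; exact Finset.sum_nonneg fun i _ => hnn i
    have hrest : ∑ i ∈ univ.erase i₀, l i ^ p ≤ (1 - t) ^ p := by
      calc ∑ i ∈ univ.erase i₀, l i ^ p ≤ ∑ i ∈ univ.erase i₀, l i * (1-t) ^ (p-1) := by
            refine Finset.sum_le_sum fun i hi => hterm (1-t) h1t0 i ?_
            rw [← hrest_sum]
            exact Finset.single_le_sum (fun j _ => hnn j) hi
        _ = (1 - t) * (1-t) ^ (p-1) := by rw [← Finset.sum_mul, hrest_sum]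
        _ = (1 - t) ^ p := by
            rw [← Real.rpow_one_add' h1t0 (by linarith : (1:ℝ) + (p-1) ≠ 0)]; ring_nf
    have hsplit : ∑ i, l i ^ p = t ^ p + ∑ i ∈ univ.erase i₀, l i ^ p := by
      rw [← Finset.add_sum_erase univ _ (mem_univ i₀)]
    have hmain : t ^ p + (1 - t) ^ p ≤ (1 - E) ^ p + E ^ p :=
      aux_convex_pair hp.le hE0 (by linarith) (by linarith) ht1E (by ring)
    rw [hsplit]; linarith
  · push_neg at hcase
    have h1 : ∑ i, l i ^ p ≤ (1/2 : ℝ) ^ (p - 1) := by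
      calc ∑ i, l i ^ p ≤ ∑ i, l i * (1/2:ℝ) ^ (p-1) :=
            Finset.sum_le_sum fun i _ => hterm _ (by norm_num) i (hcase i)
        _ = (1/2:ℝ) ^ (p-1) := by rw [← Finset.sum_mul, hsum, one_mul]
    have h2 : ((1:ℝ)/2) ^ (p-1) = 2 * (1/2:ℝ) ^ p := by
      rw [show p - 1 = p + (-1) from by ring, Real.rpow_add (by norm_num : (0:ℝ) < 1/2)]
      rw [Real.rpow_neg_one]
      norm_num
      ring
    have h3 : 2 * ((1:ℝ)/2) ^ p ≤ E ^ p + (1 - E) ^ p := by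
      have hconv := convexOn_rpow hp.le
      have := hconv.2 (Set.mem_Ici.2 hE0) (Set.mem_Ici.2 (by linarith : (0:ℝ) ≤ 1 - E))
        (by norm_num : (0:ℝ) ≤ 1/2) (by norm_num : (0:ℝ) ≤ 1/2) (by norm_num)
      simp only [smul_eq_mul] at this
      have heq : (1/2:ℝ) * E + 1/2 * (1-E) = 1/2 := by ring
      rw [heq] at this
      linarith
    linarith

namespace Stmt13Aux
variable {nA nB : ℕ}


lemma norm_prodVec2 {ι₁ ι₂ : Type*} [Fintype ι₁] [Fintype ι₂]
    (φ₁ : EuclideanSpace ℂ ι₁) (φ₂ : EuclideanSpace ℂ ι₂) :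
    ‖prodVec2 φ₁ φ₂‖ = ‖φ₁‖ * ‖φ₂‖ := by
  rw [EuclideanSpace.norm_eq, EuclideanSpace.norm_eq, EuclideanSpace.norm_eq,
    ← Real.sqrt_mul (Finset.sum_nonneg fun v _ => sq_nonneg _)]
  congr 1
  rw [Finset.sum_mul_sum, Fintype.sum_prod_type]
  exact Finset.sum_congr rfl fun a _ => Finset.sum_congr rfl fun b _ => by
    simp [prodVec2, norm_mul, mul_pow]

lemma schmidt_nonneg (ψ : EuclideanSpace ℂ (Fin nA × Fin nB)) (i : Fin nA) :
    0 ≤ schmidtSqCoeffs ψ i :=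
  Matrix.eigenvalues_self_mul_conjTranspose_nonneg _ i

lemma schmidt_sum (ψ : EuclideanSpace ℂ (Fin nA × Fin nB)) (hψ : ‖ψ‖ = 1) :
    ∑ i, schmidtSqCoeffs ψ i = 1 := by
  set M : Matrix (Fin nA) (Fin nB) ℂ := Matrix.of fun i j => ψ (i, j) with hM
  have hA := Matrix.isHermitian_mul_conjTranspose_self M
  have htr1 : (M * Mᴴ).trace = ∑ i, (hA.eigenvalues i : ℂ) := by
    conv_lhs => rw [hA.spectral_theorem]
    rw [Unitary.conjStarAlgAut_apply, Matrix.trace_mul_cycle]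
    rw [Unitary.coe_star_mul_self (Matrix.IsHermitian.eigenvectorUnitary hA), one_mul,
      Matrix.trace_diagonal]
    rfl
  have htr2 : (M * Mᴴ).trace = ((‖ψ‖ ^ 2 : ℝ) : ℂ) := by
    rw [Matrix.trace]
    have : ∀ i, (M * Mᴴ).diag i = ∑ j, ((‖ψ (i, j)‖ ^ 2 : ℝ) : ℂ) := by
      intro i
      rw [Matrix.diag_apply, Matrix.mul_apply]
      refine Finset.sum_congr rfl fun j _ => ?_
      rw [Matrix.conjTranspose_apply]
      rw [RCLike.star_def, RCLike.mul_conj]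
      norm_cast
    rw [Finset.sum_congr rfl fun i _ => this i, ← Finset.sum_product']
    rw [EuclideanSpace.norm_eq]
    rw [Real.sq_sqrt (Finset.sum_nonneg fun v _ => sq_nonneg _)]
    push_cast
    rw [Finset.univ_product_univ]
  have : ((∑ i, hA.eigenvalues i : ℝ) : ℂ) = ((1:ℝ) : ℂ) := by
    push_cast
    rw [← htr1, htr2, hψ]
    norm_num
  exact_mod_cast this

lemma dot_self_eq_norm_sq {n : Type*} [Fintype n] (v : EuclideanSpace ℂ n) :
    dotProduct (star (v : n → ℂ)) (v : n → ℂ) = ((‖v‖ ^ 2 : ℝ) : ℂ) := by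
  rw [EuclideanSpace.norm_eq, Real.sq_sqrt (Finset.sum_nonneg fun v _ => sq_nonneg _)]
  push_cast
  simp only [dotProduct, Pi.star_apply, RCLike.star_def]
  refine Finset.sum_congr rfl fun j _ => ?_
  rw [RCLike.conj_mul]
  norm_cast

lemma schmidt_le (U : Submodule ℂ (EuclideanSpace ℂ (Fin nA × Fin nB)))
    (hbdd : BddBelow {x | ∃ (φ₁ : EuclideanSpace ℂ (Fin nA)) (φ₂ : EuclideanSpace ℂ (Fin nB)),
      ‖φ₁‖ = 1 ∧ ‖φ₂‖ = 1 ∧ x = 1 - ‖U.orthogonalProjection (prodVec2 φ₁ φ₂)‖ ^ 2})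
    (hE1 : gme2 U ≤ 1)
    (ψ : EuclideanSpace ℂ (Fin nA × Fin nB)) (hψU : ψ ∈ U) (hψ : ‖ψ‖ = 1) (i : Fin nA) :
    schmidtSqCoeffs ψ i ≤ 1 - gme2 U := by
  set M : Matrix (Fin nA) (Fin nB) ℂ := Matrix.of fun i j => ψ (i, j) with hM
  have hA := Matrix.isHermitian_mul_conjTranspose_self M
  show hA.eigenvalues i ≤ 1 - gme2 U
  set lam := hA.eigenvalues i with hlam
  rcases le_or_gt lam 0 with hneg | hpos
  · linarith
  · set u : EuclideanSpace ℂ (Fin nA) := hA.eigenvectorBasis i with hu_def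
    have hu : ‖u‖ = 1 := hA.eigenvectorBasis.orthonormal.1 i
    set w : Fin nB → ℂ := Mᴴ *ᵥ (u : Fin nA → ℂ) with hw
    have key0 : M *ᵥ w = (lam : ℂ) • (u : Fin nA → ℂ) := by
      rw [hw, Matrix.mulVec_mulVec]
      have h := hA.mulVec_eigenvectorBasis i
      rw [RCLike.real_smul_eq_coe_smul (K := ℂ)] at h
      exact h
    have key1 : dotProduct (star (u : Fin nA → ℂ)) (M *ᵥ w) = (lam : ℂ) := by
      rw [key0, dotProduct_smul, dot_self_eq_norm_sq, hu]
      norm_num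
    have key2 : dotProduct (star w) w = (lam : ℂ) := by
      rw [hw, Matrix.star_mulVec, Matrix.conjTranspose_conjTranspose,
        ← dotProduct_mulVec, ← hw, key1]
    have key2' : ∑ j, ‖w j‖ ^ 2 = lam := by
      have : dotProduct (star w) w = ((∑ j, ‖w j‖ ^ 2 : ℝ) : ℂ) := by
        push_cast
        simp only [dotProduct, Pi.star_apply, RCLike.star_def]
        refine Finset.sum_congr rfl fun j _ => ?_
        rw [RCLike.conj_mul]
        norm_cast
      rw [key2] at this
      exact_mod_cast this.symm
    set s := Real.sqrt lam with hs_def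
    have hs : 0 < s := Real.sqrt_pos.2 hpos
    have hs2 : s ^ 2 = lam := Real.sq_sqrt hpos.le
    set φ₂ : EuclideanSpace ℂ (Fin nB) := WithLp.toLp 2 fun j => (s : ℂ)⁻¹ * (starRingEnd ℂ) (w j) with hφ₂def
    have hφ₂ : ‖φ₂‖ = 1 := by
      rw [EuclideanSpace.norm_eq]
      have : ∀ j, ‖φ₂ j‖ ^ 2 = s⁻¹ ^ 2 * ‖w j‖ ^ 2 := by
        intro j
        rw [hφ₂def]
        simp only [norm_mul, norm_inv, Complex.norm_real, Real.norm_eq_abs, RCLike.norm_conj,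
          abs_of_pos hs]
        ring
      rw [Finset.sum_congr rfl fun j _ => this j, ← Finset.mul_sum, key2', ← hs2]
      have : (s⁻¹) ^ 2 * s ^ 2 = 1 := by field_simp
      rw [this, Real.sqrt_one]
    have hov : @inner ℂ _ _ (prodVec2 u φ₂) ψ = (s : ℂ) := by
      have h1 : @inner ℂ _ _ (prodVec2 u φ₂) ψ
          = ∑ a : Fin nA, ∑ b : Fin nB, (starRingEnd ℂ) (u a * φ₂ b) * ψ (a, b) := by
        rw [PiLp.inner_apply, Fintype.sum_prod_type]
        simp only [RCLike.inner_apply']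
        rfl
      rw [h1]
      have h2 : ∀ a b, (starRingEnd ℂ) (u a * φ₂ b) * ψ (a, b)
          = (s : ℂ)⁻¹ * ((starRingEnd ℂ) (u a) * (M a b * w b)) := by
        intro a b
        rw [hφ₂def]
        simp only [_root_.map_mul, map_inv₀, Complex.conj_conj, Complex.conj_ofReal]
        show _ = (s:ℂ)⁻¹ * ((starRingEnd ℂ) (u a) * (ψ (a, b) * w b))
        ring
      rw [Finset.sum_congr rfl fun a _ => Finset.sum_congr rfl fun b _ => h2 a b]
      have h3 : ∑ a : Fin nA, ∑ b : Fin nB, (s : ℂ)⁻¹ * ((starRingEnd ℂ) (u a) * (M a b * w b))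
          = (s : ℂ)⁻¹ * dotProduct (star (u : Fin nA → ℂ)) (M *ᵥ w) := by
        simp only [dotProduct, Matrix.mulVec, Pi.star_apply, RCLike.star_def,
          Finset.mul_sum]
      rw [h3, key1]
      rw [show ((lam : ℝ) : ℂ) = ((s : ℂ) * (s : ℂ)) by push_cast [← hs2]; ring]
      field_simp
    -- now bound
    have hsle : s ≤ ‖(U.orthogonalProjection (prodVec2 u φ₂) : EuclideanSpace ℂ (Fin nA × Fin nB))‖ := by
      have hproj : @inner ℂ _ _ ((U.orthogonalProjection (prodVec2 u φ₂)) : EuclideanSpace ℂ (Fin nA × Fin nB)) ψ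
          = @inner ℂ _ _ (prodVec2 u φ₂) ψ := by
        have h := Submodule.inner_orthogonalProjection_eq_of_mem_right (K := U) ⟨ψ, hψU⟩ (prodVec2 u φ₂)
        rwa [Submodule.coe_inner] at h
      have := norm_inner_le_norm (𝕜 := ℂ)
        ((U.orthogonalProjection (prodVec2 u φ₂)) : EuclideanSpace ℂ (Fin nA × Fin nB)) ψ
      rw [hproj, hov, hψ, mul_one] at this
      rwa [Complex.norm_real, Real.norm_eq_abs, abs_of_pos hs] at this
    have hlamle : lam ≤ ‖(U.orthogonalProjection (prodVec2 u φ₂) : EuclideanSpace ℂ (Fin nA × Fin nB))‖ ^ 2 := by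
      rw [← hs2]
      exact pow_le_pow_left₀ hs.le hsle 2
    have hmem : (1 - ‖U.orthogonalProjection (prodVec2 u φ₂)‖ ^ 2) ∈
        {x | ∃ (φ₁ : EuclideanSpace ℂ (Fin nA)) (φ₂ : EuclideanSpace ℂ (Fin nB)),
          ‖φ₁‖ = 1 ∧ ‖φ₂‖ = 1 ∧ x = 1 - ‖U.orthogonalProjection (prodVec2 φ₁ φ₂)‖ ^ 2} :=
      ⟨u, φ₂, hu, hφ₂, rfl⟩
    have hEle : gme2 U ≤ 1 - ‖U.orthogonalProjection (prodVec2 u φ₂)‖ ^ 2 := csInf_le hbdd hmem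
    have hnorm_eq : ‖U.orthogonalProjection (prodVec2 u φ₂)‖
        = ‖(U.orthogonalProjection (prodVec2 u φ₂) : EuclideanSpace ℂ (Fin nA × Fin nB))‖ := rfl
    rw [hnorm_eq] at hEle
    linarith

end Stmt13Aux
end Aux

/-- For a nonzero subspace `U ⊆ ℂ^{n_A} ⊗ ℂ^{n_B}`,
`H_{min,p}(U) ≥ (1/(1−p)) log₂(E(U)^p + (1−E(U))^p)`. -/
theorem stmt13 (p : ℝ) (hp : 1 < p) (nA nB : ℕ)
    (U : Submodule ℂ (EuclideanSpace ℂ (Fin nA × Fin nB))) (hU : U ≠ ⊥) :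
    (1 / (1 - p)) * Real.logb 2 (gme2 U ^ p + (1 - gme2 U) ^ p) ≤ hminEnt p U := by
  classical
  obtain ⟨ψ₀, hψ₀U, hψ₀⟩ := Submodule.exists_mem_ne_zero_of_ne_bot hU
  have hne : Nonempty (Fin nA × Fin nB) := by
    by_contra h
    rw [not_nonempty_iff] at h
    exact hψ₀ (PiLp.ext fun v => (h.false v).elim)
  obtain ⟨⟨a0, b0⟩⟩ := hne
  set S := {x | ∃ (φ₁ : EuclideanSpace ℂ (Fin nA)) (φ₂ : EuclideanSpace ℂ (Fin nB)),
      ‖φ₁‖ = 1 ∧ ‖φ₂‖ = 1 ∧ x = 1 - ‖U.orthogonalProjection (prodVec2 φ₁ φ₂)‖ ^ 2} with hSdef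
  have hEdef : gme2 U = sInf S := rfl
  have hproj_le : ∀ (φ₁ : EuclideanSpace ℂ (Fin nA)) (φ₂ : EuclideanSpace ℂ (Fin nB)),
      ‖φ₁‖ = 1 → ‖φ₂‖ = 1 → ‖U.orthogonalProjection (prodVec2 φ₁ φ₂)‖ ≤ 1 := by
    intro φ₁ φ₂ h1 h2
    have hn : ‖prodVec2 φ₁ φ₂‖ = 1 := by
      rw [Stmt13Aux.norm_prodVec2, h1, h2, mul_one]
    calc ‖U.orthogonalProjection (prodVec2 φ₁ φ₂)‖
        ≤ ‖U.orthogonalProjection‖ * ‖prodVec2 φ₁ φ₂‖ :=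
          U.orthogonalProjection.le_opNorm _
      _ ≤ 1 * 1 := by
          exact mul_le_mul (Submodule.orthogonalProjection_norm_le U) hn.le (norm_nonneg _) zero_le_one
      _ = 1 := by norm_num
  have hbdd : BddBelow S := by
    refine ⟨0, ?_⟩
    rintro x ⟨φ₁, φ₂, h1, h2, rfl⟩
    have := hproj_le φ₁ φ₂ h1 h2
    nlinarith [norm_nonneg (U.orthogonalProjection (prodVec2 φ₁ φ₂))]
  have hSne : S.Nonempty := by
    refine ⟨_, EuclideanSpace.single a0 (1:ℂ), EuclideanSpace.single b0 (1:ℂ), ?_, ?_, rfl⟩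
    · rw [EuclideanSpace.norm_single]; norm_num
    · rw [EuclideanSpace.norm_single]; norm_num
  have hE0 : 0 ≤ gme2 U := by
    rw [hEdef]
    refine le_csInf hSne ?_
    rintro x ⟨φ₁, φ₂, h1, h2, rfl⟩
    have := hproj_le φ₁ φ₂ h1 h2
    nlinarith [norm_nonneg (U.orthogonalProjection (prodVec2 φ₁ φ₂))]
  have hE1 : gme2 U ≤ 1 := by
    rw [hEdef]
    obtain ⟨x, hx⟩ := hSne
    refine (csInf_le hbdd hx).trans ?_
    obtain ⟨φ₁, φ₂, h1, h2, rfl⟩ := hx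
    nlinarith [norm_nonneg (U.orthogonalProjection (prodVec2 φ₁ φ₂))]
  -- now bound hminEnt from below
  have hmne : {x | ∃ ψ ∈ U, ‖ψ‖ = 1 ∧ x = renyiEnt p ψ}.Nonempty := by
    refine ⟨renyiEnt p (‖ψ₀‖⁻¹ • ψ₀), ‖ψ₀‖⁻¹ • ψ₀,
      U.smul_of_tower_mem _ hψ₀U, norm_smul_inv_norm hψ₀, rfl⟩
  refine le_csInf hmne ?_
  rintro x ⟨ψ, hψU, hψn, rfl⟩
  have hsum := Stmt13Aux.schmidt_sum ψ hψn
  have hnn := fun i => Stmt13Aux.schmidt_nonneg ψ i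
  have hub : ∀ i, schmidtSqCoeffs ψ i ≤ 1 - gme2 U :=
    fun i => Stmt13Aux.schmidt_le U hbdd hE1 ψ hψU hψn i
  have key : ∑ i, schmidtSqCoeffs ψ i ^ p ≤ gme2 U ^ p + (1 - gme2 U) ^ p :=
    aux_sum_rpow _ _ p hp hE0 hE1 hnn hub hsum
  have hBpos : 0 < ∑ i, schmidtSqCoeffs ψ i ^ p := by
    have hex : ∃ i, 0 < schmidtSqCoeffs ψ i := by
      by_contra h
      push_neg at h
      have : ∑ i, schmidtSqCoeffs ψ i ≤ 0 := Finset.sum_nonpos fun i _ => h i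
      rw [hsum] at this
      linarith
    obtain ⟨i, hi⟩ := hex
    exact Finset.sum_pos' (fun j _ => Real.rpow_nonneg (hnn j) p)
      ⟨i, Finset.mem_univ i, Real.rpow_pos_of_pos hi p⟩
  have hlog : Real.logb 2 (∑ i, schmidtSqCoeffs ψ i ^ p)
      ≤ Real.logb 2 (gme2 U ^ p + (1 - gme2 U) ^ p) :=
    Real.logb_le_logb_of_le (by norm_num) hBpos key
  have hc : (1 / (1 - p)) ≤ 0 := by
    apply div_nonpos_of_nonneg_of_nonpos <;> linarith
  show _ ≤ (1 / (1 - p)) * Real.logb 2 (∑ i, schmidtSqCoeffs ψ i ^ p)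
  exact mul_le_mul_of_nonpos_left hlog hc
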